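/- arXiv:1910.11991 — 3 statements merged into one kernel-verified Lean document; each statement's English description precedes it below -/
import Mathlib

section
/- Under the setup of the previous statement (full logistic model P(Y=1|σ(X)) = expit(β₀ᵀX) a.s., bounded Z = ζ(X), θ₀ solving E[(Y − expit(θ₀ᵀZ))Z] = 0, and selection indicator R with E[R | σ(Y,X)] = π(Y, s(X)) a.s., π taking values in (0,1]), the influence function Ψ₁ := R·f(X, Z; β₀, θ₀)/π(Y, s(X)) + (Y − expit(θ₀ᵀZ)) Z, where f(x,z;β,θ) = (expit(βᵀx) − expit(θᵀz)) z, has mean zero: E[Ψ₁] = 0. -/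
open MeasureTheory

/-- The standard logistic (expit) function. -/
noncomputable def expit (t : ℝ) : ℝ := Real.exp t / (1 + Real.exp t)

lemma myPullOut {Ω : Type*} {m m0 : MeasurableSpace Ω} (hm : m ≤ m0) (μ : @Measure Ω m0)
    [IsProbabilityMeasure μ] {f g : Ω → ℝ}
    (hf : StronglyMeasurable[m] f) (hfg : Integrable (f * g) μ) (hg : Integrable g μ) :
    ∫ ω, f ω * g ω ∂μ = ∫ ω, f ω * (μ[g|m]) ω ∂μ := by
  haveI : SigmaFinite (μ.trim hm) := by infer_instance
  calc ∫ ω, f ω * g ω ∂μ = ∫ ω, (μ[f * g|m]) ω ∂μ := (integral_condExp hm).symm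
    _ = ∫ ω, f ω * (μ[g|m]) ω ∂μ :=
        integral_congr_ae (condExp_mul_of_stronglyMeasurable_left hf hfg hg)

lemma myBdd {Ω : Type*} [MeasurableSpace Ω] (μ : Measure Ω) [IsProbabilityMeasure μ]
    {f : Ω → ℝ} (C : ℝ) (hf : Measurable f) (hb : ∀ ω, |f ω| ≤ C) : Integrable f μ :=
  (integrable_const C).mono' hf.aestronglyMeasurable
    (Filter.Eventually.of_forall fun ω => by simpa [Real.norm_eq_abs] using hb ω)

lemma expit_mem (t : ℝ) : expit t ∈ Set.Ioo (0:ℝ) 1 := by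
  constructor
  · unfold expit; positivity
  · unfold expit
    rw [div_lt_one (by positivity)]
    linarith [Real.exp_pos t]

lemma expit_meas : Measurable expit := by
  have : Continuous expit := by
    unfold expit
    exact Real.continuous_exp.div (continuous_const.add Real.continuous_exp)
      (fun t => by positivity)
  exact this.measurable


/-- The influence function of the first block of the stacked GMM estimating
function, `Ψ₁ = R·f(X, Z; β₀, θ₀)/π(Y, s(X)) + (Y − expit(θ₀ᵀZ)) Z`, has mean zero,
where `f(x, z; β, θ) = (expit(βᵀx) − expit(θᵀz)) z`. -/
theorem stmt4 {Ω : Type*} [MeasurableSpace Ω] (μ : Measure Ω) [IsProbabilityMeasure μ]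
    {q q₁ : ℕ} {𝒮 : Type*} [MeasurableSpace 𝒮]
    (X : Ω → (Fin q → ℝ)) (Y R : Ω → ℝ) (β₀ : Fin q → ℝ)
    (hX : Measurable X) (hY : Measurable Y) (hR : Measurable R)
    (hY01 : ∀ ω, Y ω = 0 ∨ Y ω = 1) (hR01 : ∀ ω, R ω = 0 ∨ R ω = 1)
    (hmodel : μ[Y | MeasurableSpace.comap X inferInstance] =ᵐ[μ]
      fun ω => expit (∑ i, β₀ i * X ω i))
    (ζ : (Fin q → ℝ) → (Fin q₁ → ℝ)) (hζm : Measurable ζ)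
    (Mζ : ℝ) (hζb : ∀ x i, |ζ x i| ≤ Mζ)
    (θ₀ : Fin q₁ → ℝ)
    (hθ₀ : ∀ j, ∫ ω, (Y ω - expit (∑ i, θ₀ i * ζ (X ω) i)) * ζ (X ω) j ∂μ = 0)
    (s : (Fin q → ℝ) → 𝒮) (hs : Measurable s)
    (π : ℝ → 𝒮 → ℝ) (hπ : Measurable fun p : ℝ × 𝒮 => π p.1 p.2)
    (hπrange : ∀ y ∈ ({0, 1} : Set ℝ), ∀ st, π y st ∈ Set.Ioc (0 : ℝ) 1)
    (hsel : μ[R | MeasurableSpace.comap (fun ω => (Y ω, X ω)) inferInstance] =ᵐ[μ]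
      fun ω => π (Y ω) (s (X ω))) :
    ∀ j, ∫ ω,
      (R ω * ((expit (∑ i, β₀ i * X ω i) - expit (∑ i, θ₀ i * ζ (X ω) i)) * ζ (X ω) j) /
          π (Y ω) (s (X ω)) +
        (Y ω - expit (∑ i, θ₀ i * ζ (X ω) i)) * ζ (X ω) j) ∂μ = 0 := by
  intro j
  have hm : MeasurableSpace.comap (fun ω => (Y ω, X ω)) inferInstance ≤ _ :=
    (hY.prodMk hX).comap_le
  -- basic measurability
  have hXb : Measurable fun ω => ∑ i, β₀ i * X ω i :=
    Finset.measurable_sum _ fun i _ => measurable_const.mul ((measurable_pi_apply i).comp hX)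
  have hZ : Measurable fun ω => ζ (X ω) j := (measurable_pi_apply j).comp (hζm.comp hX)
  have hZθ : Measurable fun ω => ∑ i, θ₀ i * ζ (X ω) i :=
    Finset.measurable_sum _ fun i _ =>
      measurable_const.mul ((measurable_pi_apply i).comp (hζm.comp hX))
  set g : Ω → ℝ := fun ω =>
    (expit (∑ i, β₀ i * X ω i) - expit (∑ i, θ₀ i * ζ (X ω) i)) * ζ (X ω) j with hgdef
  set p : Ω → ℝ := fun ω => π (Y ω) (s (X ω)) with hpdef
  set B : Ω → ℝ := fun ω => (Y ω - expit (∑ i, θ₀ i * ζ (X ω) i)) * ζ (X ω) j with hBdef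
  set A : Ω → ℝ := fun ω => R ω * g ω / p ω with hAdef
  have hgm : Measurable g := ((expit_meas.comp hXb).sub (expit_meas.comp hZθ)).mul hZ
  have hpm : Measurable p := hπ.comp (hY.prodMk (hs.comp hX))
  have hBm : Measurable B := (hY.sub (expit_meas.comp hZθ)).mul hZ
  have hp01 : ∀ ω, p ω ∈ Set.Ioc (0:ℝ) 1 := fun ω =>
    hπrange _ (by rcases hY01 ω with h | h <;> simp [h]) (s (X ω))
  have hMζ : 0 ≤ Mζ := le_trans (abs_nonneg _) (hζb (fun _ => 0) j)
  -- bounds and integrability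
  have hgb : ∀ ω, |g ω| ≤ Mζ := by
    intro ω
    have e1 := expit_mem (∑ i, β₀ i * X ω i)
    have e2 := expit_mem (∑ i, θ₀ i * ζ (X ω) i)
    have h1 : |expit (∑ i, β₀ i * X ω i) - expit (∑ i, θ₀ i * ζ (X ω) i)| ≤ 1 := by
      rw [abs_le]; constructor <;> [linarith [e1.1, e2.2]; linarith [e1.2, e2.1]]
    calc |g ω| = _ * |ζ (X ω) j| := abs_mul _ _
      _ ≤ 1 * Mζ := mul_le_mul h1 (hζb _ j) (abs_nonneg _) zero_le_one
      _ = Mζ := one_mul _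
  have hBb : ∀ ω, |B ω| ≤ Mζ := by
    intro ω
    have e2 := expit_mem (∑ i, θ₀ i * ζ (X ω) i)
    have h1 : |Y ω - expit (∑ i, θ₀ i * ζ (X ω) i)| ≤ 1 := by
      rcases hY01 ω with h | h <;> rw [h] <;> rw [abs_le] <;>
        constructor <;> linarith [e2.1, e2.2]
    calc |B ω| = _ * |ζ (X ω) j| := abs_mul _ _
      _ ≤ 1 * Mζ := mul_le_mul h1 (hζb _ j) (abs_nonneg _) zero_le_one
      _ = Mζ := one_mul _
  have hBint : Integrable B μ := myBdd μ Mζ hBm hBb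
  have hgint : Integrable g μ := myBdd μ Mζ hgm hgb
  have hRint : Integrable R μ := myBdd μ 1 hR (fun ω => by rcases hR01 ω with h | h <;> simp [h])
  have hYint : Integrable Y μ := myBdd μ 1 hY (fun ω => by rcases hY01 ω with h | h <;> simp [h])
  -- ∫ g = 0  (uses the full model and hθ₀)
  have hg0 : ∫ ω, g ω ∂μ = 0 := by
    have hm' : MeasurableSpace.comap X inferInstance ≤ _ := hX.comap_le
    have hZm' : StronglyMeasurable[MeasurableSpace.comap X inferInstance]
        (fun ω => ζ (X ω) j) :=
      (((measurable_pi_apply j).comp hζm).comp (comap_measurable X)).stronglyMeasurable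
    have hZYint : Integrable ((fun ω => ζ (X ω) j) * Y) μ := by
      refine myBdd μ Mζ (hZ.mul hY) fun ω => ?_
      rcases hY01 ω with h | h <;>
        simp [h, abs_mul, abs_nonneg, hζb (X ω) j, hMζ]
    have key : ∫ ω, ζ (X ω) j * Y ω ∂μ
        = ∫ ω, ζ (X ω) j * expit (∑ i, β₀ i * X ω i) ∂μ := by
      rw [myPullOut hm' μ hZm' hZYint hYint]
      exact integral_congr_ae (hmodel.mono fun ω hω =>
        congrArg (fun t => ζ (X ω) j * t) hω)
    have hsplit : ∀ ω, g ω = ζ (X ω) j * expit (∑ i, β₀ i * X ω i)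
        - ζ (X ω) j * Y ω + B ω := by intro ω; simp only [hgdef, hBdef]; ring
    have hEint : Integrable (fun ω => ζ (X ω) j * expit (∑ i, β₀ i * X ω i)) μ := by
      refine myBdd μ Mζ (hZ.mul (expit_meas.comp hXb)) fun ω => ?_
      have e1 := expit_mem (∑ i, β₀ i * X ω i)
      rw [abs_mul]
      calc |ζ (X ω) j| * |expit (∑ i, β₀ i * X ω i)| ≤ Mζ * 1 :=
            mul_le_mul (hζb _ j) (by rw [abs_le]; constructor <;> linarith [e1.1, e1.2])
              (abs_nonneg _) hMζ
        _ = Mζ := mul_one _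
    have hD : Integrable (fun ω => ζ (X ω) j * expit (∑ i, β₀ i * X ω i)
        - ζ (X ω) j * Y ω) μ := hEint.sub hZYint
    calc ∫ ω, g ω ∂μ
        = ∫ ω, (ζ (X ω) j * expit (∑ i, β₀ i * X ω i) - ζ (X ω) j * Y ω + B ω) ∂μ := by
          exact integral_congr_ae (Filter.Eventually.of_forall hsplit)
      _ = ∫ ω, (ζ (X ω) j * expit (∑ i, β₀ i * X ω i) - ζ (X ω) j * Y ω) ∂μ
            + ∫ ω, B ω ∂μ := integral_add hD hBint
      _ = (∫ ω, ζ (X ω) j * expit (∑ i, β₀ i * X ω i) ∂μ - ∫ ω, ζ (X ω) j * Y ω ∂μ)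
            + ∫ ω, B ω ∂μ :=
          congrArg (fun t => t + ∫ ω, B ω ∂μ) (integral_sub hEint hZYint)
      _ = 0 := by rw [key, hθ₀ j]; ring
  -- main case split on integrability of the whole integrand
  show ∫ ω, (A ω + B ω) ∂μ = 0
  by_cases hI : Integrable (fun ω => A ω + B ω) μ
  · have hAint : Integrable A μ := by
      have := hI.sub hBint
      exact this.congr (Filter.Eventually.of_forall fun ω => by simp)
    -- pull-out on m = σ(Y, X)
    set h : Ω → ℝ := fun ω => g ω / p ω with hhdef
    have hhm : StronglyMeasurable[MeasurableSpace.comap (fun ω => (Y ω, X ω)) inferInstance] h := by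
      have hF : Measurable fun x : ℝ × (Fin q → ℝ) =>
          ((expit (∑ i, β₀ i * x.2 i) - expit (∑ i, θ₀ i * ζ x.2 i)) * ζ x.2 j)
            / π x.1 (s x.2) := by
        refine Measurable.div ?_ (hπ.comp (measurable_fst.prodMk (hs.comp measurable_snd)))
        refine Measurable.mul (Measurable.sub ?_ ?_) ?_
        · exact expit_meas.comp (Finset.measurable_sum _ fun i _ =>
            measurable_const.mul ((measurable_pi_apply i).comp measurable_snd))
        · exact expit_meas.comp (Finset.measurable_sum _ fun i _ =>
            measurable_const.mul ((measurable_pi_apply i).comp (hζm.comp measurable_snd)))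
        · exact (measurable_pi_apply j).comp (hζm.comp measurable_snd)
      exact (hF.comp (comap_measurable (fun ω => (Y ω, X ω)))).stronglyMeasurable
    have hhR : Integrable (h * R) μ := by
      refine hAint.congr (Filter.Eventually.of_forall fun ω => ?_)
      simp only [hAdef, hhdef, Pi.mul_apply]
      ring
    have hAg : ∫ ω, A ω ∂μ = ∫ ω, g ω ∂μ := by
      calc ∫ ω, A ω ∂μ = ∫ ω, h ω * R ω ∂μ := by
            refine integral_congr_ae (Filter.Eventually.of_forall fun ω => ?_)
            simp only [hAdef, hhdef]; ring
        _ = ∫ ω, h ω * (μ[R|MeasurableSpace.comap (fun ω => (Y ω, X ω)) inferInstance]) ω ∂μ := myPullOut hm μ hhm hhR hRint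
        _ = ∫ ω, h ω * p ω ∂μ :=
            integral_congr_ae (hsel.mono fun ω hω => congrArg (fun t => h ω * t) hω)
        _ = ∫ ω, g ω ∂μ := by
            refine integral_congr_ae (Filter.Eventually.of_forall fun ω => ?_)
            simp only [hhdef]
            exact div_mul_cancel₀ _ (ne_of_gt (hp01 ω).1)
    have hB0 : ∫ ω, B ω ∂μ = 0 := hθ₀ j
    rw [integral_add hAint hBint, hAg, hg0, hB0, add_zero]
  · exact integral_undef hI
end

section
/- Let (Ω, ℱ, P) be a probability space, X : Ω → ℝ^q a random vector taking values in a countable set, Y : Ω → {0,1}, s : ℝ^q → 𝒮 a map, π : {0,1} × 𝒮 → (0,1], and R : Ω → {0,1} a selection indicator such that P(R = 1 | Y = y, X = x) = π(y, s(x)) for all (y,x) with P(Y = y, X = x) > 0. Suppose P(Y = 1 | X = x) = expit(β₀ᵀx) whenever P(X = x) > 0. Then for every x with P(X = x, R = 1) > 0, P(Y = 1 | X = x, R = 1) = expit( β₀ᵀx + log( π(1, s(x)) / π(0, s(x)) ) ). -/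
open MeasureTheory

/-- Under outcome- and stratum-dependent selection
`P(R = 1 | Y = y, X = x) = π(y, s(x))` and the population logistic model
`P(Y = 1 | X = x) = expit(β₀ᵀx)`, the disease model among the selected subjects is again
logistic with intercept shifted by the offset `log(π(1, s(x))/π(0, s(x)))`:
`P(Y = 1 | X = x, R = 1) = expit(β₀ᵀx + log(π(1, s(x))/π(0, s(x))))`.
Conditional probabilities are written out as ratio-free identities between measures. -/
theorem stmt6 {Ω : Type*} [MeasurableSpace Ω] (μ : Measure Ω) [IsProbabilityMeasure μ]
    {q : ℕ} {𝒮 : Type*}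
    (X : Ω → (Fin q → ℝ)) (Y R : Ω → ℝ) (s : (Fin q → ℝ) → 𝒮)
    (π : ℝ → 𝒮 → ℝ) (β₀ : Fin q → ℝ)
    (hX : Measurable X) (hY : Measurable Y) (hR : Measurable R)
    (hcount : (Set.range X).Countable)
    (hY01 : ∀ ω, Y ω = 0 ∨ Y ω = 1) (hR01 : ∀ ω, R ω = 0 ∨ R ω = 1)
    (hπrange : ∀ y ∈ ({0, 1} : Set ℝ), ∀ st, π y st ∈ Set.Ioc (0 : ℝ) 1)
    (hsel : ∀ y ∈ ({0, 1} : Set ℝ), ∀ x, μ {ω | Y ω = y ∧ X ω = x} ≠ 0 →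
      (μ ({ω | R ω = 1} ∩ {ω | Y ω = y ∧ X ω = x})).toReal =
        π y (s x) * (μ {ω | Y ω = y ∧ X ω = x}).toReal)
    (hmodel : ∀ x, μ {ω | X ω = x} ≠ 0 →
      (μ ({ω | Y ω = 1} ∩ {ω | X ω = x})).toReal =
        expit (∑ i, β₀ i * x i) * (μ {ω | X ω = x}).toReal) :
    ∀ x, μ ({ω | X ω = x} ∩ {ω | R ω = 1}) ≠ 0 →
      (μ ({ω | Y ω = 1} ∩ ({ω | X ω = x} ∩ {ω | R ω = 1}))).toReal =
        expit ((∑ i, β₀ i * x i) + Real.log (π 1 (s x) / π 0 (s x))) *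
          (μ ({ω | X ω = x} ∩ {ω | R ω = 1})).toReal := by
  intro x hne
  set t := ∑ i, β₀ i * x i with ht
  set p1 := π 1 (s x) with hp1def
  set p0 := π 0 (s x) with hp0def
  obtain ⟨hp1pos, hp1le⟩ := hπrange 1 (by simp) (s x)
  obtain ⟨hp0pos, hp0le⟩ := hπrange 0 (by simp) (s x)
  set S1 : Set Ω := {ω | Y ω = 1 ∧ X ω = x} with hS1def
  set S0 : Set Ω := {ω | Y ω = 0 ∧ X ω = x} with hS0def
  set Rs : Set Ω := {ω | R ω = 1} with hRsdef
  have hmx : MeasurableSet {ω | X ω = x} := hX (measurableSet_singleton x)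
  have hmS1 : MeasurableSet S1 :=
    (hY (measurableSet_singleton 1)).inter (hX (measurableSet_singleton x))
  have hmS0 : MeasurableSet S0 :=
    (hY (measurableSet_singleton 0)).inter (hX (measurableSet_singleton x))
  have hmR : MeasurableSet Rs := hR (measurableSet_singleton 1)
  have hdisj : Disjoint S1 S0 := by
    rw [Set.disjoint_left]
    rintro ω ⟨h1, -⟩ ⟨h0, -⟩
    rw [h1] at h0; norm_num at h0
  have hXsplit : {ω | X ω = x} = S1 ∪ S0 := by
    ext ω
    simp only [hS1def, hS0def, Set.mem_setOf_eq, Set.mem_union]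
    constructor
    · intro h; rcases hY01 ω with h' | h'
      · exact Or.inr ⟨h', h⟩
      · exact Or.inl ⟨h', h⟩
    · rintro (⟨-, h⟩ | ⟨-, h⟩) <;> exact h
  set a := (μ S1).toReal with hadef
  set b := (μ S0).toReal with hbdef
  have hab : (μ {ω | X ω = x}).toReal = a + b := by
    rw [hXsplit, measure_union hdisj hmS0,
      ENNReal.toReal_add (measure_ne_top μ _) (measure_ne_top μ _)]
  have hXne : μ {ω | X ω = x} ≠ 0 :=
    fun h => hne (measure_mono_null Set.inter_subset_left h)
  have hseteq : {ω | Y ω = 1} ∩ {ω | X ω = x} = S1 := by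
    ext ω; simp [hS1def, Set.mem_setOf_eq]
  have hmod : a = expit t * (a + b) := by
    have := hmodel x hXne
    rw [hab, hseteq] at this
    exact this
  have r1 : (μ (Rs ∩ S1)).toReal = p1 * a := by
    by_cases h : μ S1 = 0
    · rw [measure_mono_null Set.inter_subset_right h]
      rw [hadef, h]; simp
    · exact hsel 1 (by simp) x h
  have r0 : (μ (Rs ∩ S0)).toReal = p0 * b := by
    by_cases h : μ S0 = 0
    · rw [measure_mono_null Set.inter_subset_right h]
      rw [hbdef, h]; simp
    · exact hsel 0 (by simp) x h
  have e2 : {ω | X ω = x} ∩ Rs = (Rs ∩ S1) ∪ (Rs ∩ S0) := by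
    rw [hXsplit, Set.inter_comm, Set.inter_union_distrib_left]
  have e1 : {ω | Y ω = 1} ∩ ({ω | X ω = x} ∩ Rs) = Rs ∩ S1 := by
    ext ω
    simp only [hS1def, hRsdef, Set.mem_inter_iff, Set.mem_setOf_eq]
    tauto
  have hnum : (μ ({ω | Y ω = 1} ∩ ({ω | X ω = x} ∩ Rs))).toReal = p1 * a := by
    rw [e1, r1]
  have hden : (μ ({ω | X ω = x} ∩ Rs)).toReal = p1 * a + p0 * b := by
    rw [e2, measure_union (hdisj.mono Set.inter_subset_right Set.inter_subset_right)]
    · rw [ENNReal.toReal_add (measure_ne_top μ _) (measure_ne_top μ _), r1, r0]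
    · exact hmR.inter hmS0
  rw [hnum, hden]
  -- algebra
  set E := Real.exp t with hEdef
  have hEpos : (0 : ℝ) < E := Real.exp_pos t
  have h1E : (0 : ℝ) < 1 + E := by linarith
  have hEb : a = E * b := by
    rw [expit, div_mul_eq_mul_div, eq_div_iff h1E.ne'] at hmod
    linear_combination hmod
  rw [expit, Real.exp_add, Real.exp_log (by positivity : (0:ℝ) < p1 / p0)]
  rw [hEb]
  have hdpos : (0 : ℝ) < 1 + E * (p1 / p0) := by positivity
  have hp0ne : p0 ≠ 0 := hp0pos.ne'
  have hp1E : p1 * E + p0 ≠ 0 := by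
    have : 0 < p1 * E := mul_pos hp1pos hEpos
    have : 0 < p0 := hp0pos
    linarith
  rw [← hEdef]
  field_simp
  linear_combination (-(p1 * b)) * (mul_inv_cancel₀ hp1E)
end

section
/- Let V be an m×m real symmetric positive definite matrix, Γ an m×q real matrix of full column rank q, and C an m×m real symmetric positive semidefinite matrix such that ΓᵀCΓ is invertible. Then the matrix (ΓᵀCΓ)⁻¹ ΓᵀC V C Γ (ΓᵀCΓ)⁻¹ − (Γᵀ V⁻¹ Γ)⁻¹ is positive semidefinite. -/
open Matrix

/-- Optimality of the GMM weight matrix in the Loewner order: for symmetric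
positive definite `V`, full column rank `Γ`, and symmetric positive semidefinite `C` with
`ΓᵀCΓ` invertible, the sandwich variance with weight `C` dominates `(ΓᵀV⁻¹Γ)⁻¹`:
`(ΓᵀCΓ)⁻¹ ΓᵀC V C Γ (ΓᵀCΓ)⁻¹ − (ΓᵀV⁻¹Γ)⁻¹` is positive semidefinite. -/
theorem stmt8 {m q : ℕ} (V : Matrix (Fin m) (Fin m) ℝ) (hV : V.PosDef)
    (Γ : Matrix (Fin m) (Fin q) ℝ) (hΓ : Γ.rank = q)
    (C : Matrix (Fin m) (Fin m) ℝ) (hC : C.PosSemidef)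
    (hinv : IsUnit (Γᵀ * C * Γ).det) :
    ((Γᵀ * C * Γ)⁻¹ * (Γᵀ * C * V * C * Γ) * (Γᵀ * C * Γ)⁻¹ -
      (Γᵀ * V⁻¹ * Γ)⁻¹).PosSemidef := by
  -- Γ has injective mulVec
  have hΓinj : Function.Injective Γ.mulVecLin := by
    rw [← LinearMap.ker_eq_bot, ← Submodule.finrank_eq_zero (R := ℝ)]
    have h := LinearMap.finrank_range_add_finrank_ker Γ.mulVecLin
    rw [Matrix.rank] at hΓ
    rw [hΓ, Module.finrank_pi] at h
    simp only [Fintype.card_fin] at h; omega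
  have hVinv : V⁻¹.PosDef := hV.inv
  -- W := Γᵀ V⁻¹ Γ is positive definite
  set W : Matrix (Fin q) (Fin q) ℝ := Γᵀ * V⁻¹ * Γ with hW
  have hWpd : W.PosDef := by
    refine PosDef.of_dotProduct_mulVec_pos ?_ ?_
    · have := isHermitian_conjTranspose_mul_mul Γ hVinv.1
      rwa [conjTranspose_eq_transpose_of_trivial] at this
    · intro x hx
      have hΓx : Γ *ᵥ x ≠ 0 := by
        intro h0
        exact hx (hΓinj (by simpa [Matrix.mulVecLin_apply] using h0))
      have := hVinv.dotProduct_mulVec_pos hΓx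
      simpa only [hW, ← Matrix.mulVec_mulVec, Matrix.dotProduct_mulVec (v := x),
        star_trivial, Matrix.vecMul_transpose, Matrix.dotProduct_mulVec] using this
  have hWdet : IsUnit W.det := hWpd.det_pos.ne'.isUnit
  have hVdet : IsUnit V.det := hV.det_pos.ne'.isUnit
  have hCsym : Cᵀ = C := by
    rw [← conjTranspose_eq_transpose_of_trivial]; exact hC.1
  have hVisym : V⁻¹ᵀ = V⁻¹ := by
    rw [← conjTranspose_eq_transpose_of_trivial]; exact hVinv.1
  set S : Matrix (Fin q) (Fin q) ℝ := Γᵀ * C * Γ with hS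
  have hSsym : Sᵀ = S := by
    rw [hS]; simp only [transpose_mul, transpose_transpose, hCsym, Matrix.mul_assoc]
  have hSisym : S⁻¹ᵀ = S⁻¹ := by rw [transpose_nonsing_inv, hSsym]
  have hWsym : Wᵀ = W := by
    rw [hW]; simp only [transpose_mul, transpose_transpose, hVisym, Matrix.mul_assoc]
  have hWisym : W⁻¹ᵀ = W⁻¹ := by rw [transpose_nonsing_inv, hWsym]
  set D : Matrix (Fin m) (Fin q) ℝ := C * Γ * S⁻¹ - V⁻¹ * Γ * W⁻¹ with hD
  have cV : ∀ (X : Matrix (Fin m) (Fin q) ℝ), V * (V⁻¹ * X) = X :=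
    fun X => Matrix.mul_nonsing_inv_cancel_left V X hVdet
  have cVi : ∀ (X : Matrix (Fin m) (Fin q) ℝ), V⁻¹ * (V * X) = X :=
    fun X => Matrix.nonsing_inv_mul_cancel_left V X hVdet
  have e1 : ∀ (X : Matrix (Fin q) (Fin q) ℝ), Γᵀ * (C * (Γ * X)) = S * X := by
    intro X; rw [hS]; simp only [Matrix.mul_assoc]
  have e2 : ∀ (X : Matrix (Fin q) (Fin q) ℝ), Γᵀ * (V⁻¹ * (Γ * X)) = W * X := by
    intro X; rw [hW]; simp only [Matrix.mul_assoc]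
  have cS : ∀ (X : Matrix (Fin q) (Fin q) ℝ), S⁻¹ * (S * X) = X :=
    fun X => Matrix.nonsing_inv_mul_cancel_left S X hinv
  have cS2 : S * S⁻¹ = 1 := Matrix.mul_nonsing_inv S hinv
  have cW : ∀ (X : Matrix (Fin q) (Fin q) ℝ), W⁻¹ * (W * X) = X :=
    fun X => Matrix.nonsing_inv_mul_cancel_left W X hWdet
  have hDT : Dᵀ = S⁻¹ * Γᵀ * C - W⁻¹ * Γᵀ * V⁻¹ := by
    rw [hD]
    simp only [transpose_sub, transpose_mul, transpose_transpose, hCsym, hVisym, hSisym,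
      hWisym, Matrix.mul_assoc]
  have heq : S⁻¹ * (Γᵀ * C * V * C * Γ) * S⁻¹ - W⁻¹ = Dᵀ * V * D := by
    rw [hDT, hD]
    simp only [Matrix.sub_mul, Matrix.mul_sub, Matrix.mul_assoc, cV, cVi, e1, e2, cS, cS2,
      cW, Matrix.mul_one]
    simp only [sub_self, sub_zero]
  rw [heq]
  have := hV.posSemidef.conjTranspose_mul_mul_same D
  rwa [conjTranspose_eq_transpose_of_trivial] at this
end
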